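/- The K-algebra homomorphism β from the q-oscillator algebra W_q⁰ to the skew Laurent polynomial ring U = K(h)[x^{±1}; σ], defined by β(u) = hx⁻¹ and β(v) = x, is injective. -/

import Mathlib

lemma linIndep_of_degree_eq {K : Type} [Field K] (v : ℕ → Polynomial K)
    (hdeg : ∀ n, (v n).degree = n) : LinearIndependent K v := by
  rw [linearIndependent_iff]
  intro l hl
  by_contra hne
  have hsupp : l.support.Nonempty := Finsupp.support_nonempty_iff.mpr hne
  set n := l.support.max' hsupp with hn
  have hmem : n ∈ l.support := l.support.max'_mem hsupp
  have hc : (Finsupp.linearCombination K v l).coeff n = l n * (v n).coeff n := by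
    rw [Finsupp.linearCombination_apply, Finsupp.sum, Polynomial.finset_sum_coeff]
    rw [Finset.sum_eq_single n]
    · simp [Polynomial.coeff_smul, smul_eq_mul]
    · intro i hi hine
      have hilt : i < n := lt_of_le_of_ne (l.support.le_max' i hi) hine
      have : (v i).coeff n = 0 := by
        apply Polynomial.coeff_eq_zero_of_degree_lt
        rw [hdeg i]
        exact_mod_cast hilt
      simp [Polynomial.coeff_smul, this]
    · intro h; exact absurd hmem h
  rw [hl] at hc
  have hvn : (v n).coeff n ≠ 0 := Polynomial.coeff_ne_zero_of_eq_degree (hdeg n)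
  have : l n = 0 := by
    rcases mul_eq_zero.mp hc.symm with h | h
    · exact h
    · exact absurd h hvn
  exact (Finsupp.mem_support_iff.mp hmem) this

/-- Relation of the `q`-oscillator algebra `W_q⁰`: generators `u = 0`, `v = 1`,
with `u v - q v u = 1`. -/
inductive W0Rel (K : Type) [CommRing K] (q : K) :
    FreeAlgebra K (Fin 2) → FreeAlgebra K (Fin 2) → Prop
  | weyl : W0Rel K q (FreeAlgebra.ι K 0 * FreeAlgebra.ι K 1)
      (q • (FreeAlgebra.ι K 1 * FreeAlgebra.ι K 0) + 1)

/-- The `q`-oscillator algebra `W_q⁰`. -/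
abbrev W0 (K : Type) [CommRing K] (q : K) : Type := RingQuot (W0Rel K q)


section Aux

variable {K : Type} [Field K] {q : K}

lemma aux_haff (hq : q ≠ 0) (σ : RatFunc K ≃ₐ[K] RatFunc K)
    (hσ : σ RatFunc.X = RatFunc.C q⁻¹ * (RatFunc.X - 1)) :
    ∀ n : ℤ, ∃ a b : K, a ≠ 0 ∧
      (σ ^ n) RatFunc.X = RatFunc.C a * RatFunc.X + RatFunc.C b := by
  have hCs : ∀ a : K, σ (RatFunc.C a) = RatFunc.C a := by
    intro a; rw [← RatFunc.algebraMap_eq_C]; exact σ.commutes a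
  have hCi : ∀ a : K, (σ⁻¹ : RatFunc K ≃ₐ[K] RatFunc K) (RatFunc.C a) = RatFunc.C a := by
    intro a; rw [← RatFunc.algebraMap_eq_C]
    exact (σ⁻¹ : RatFunc K ≃ₐ[K] RatFunc K).commutes a
  have hσinv : (σ⁻¹ : RatFunc K ≃ₐ[K] RatFunc K) RatFunc.X
      = RatFunc.C q * RatFunc.X + RatFunc.C 1 := by
    apply σ.injective
    rw [show σ ((σ⁻¹ : RatFunc K ≃ₐ[K] RatFunc K) RatFunc.X)
        = RatFunc.X from σ.apply_symm_apply RatFunc.X]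
    rw [map_add, map_mul, hCs, hCs, hσ, ← mul_assoc, ← map_mul,
      mul_inv_cancel₀ hq, map_one, one_mul]
    ring
  intro n
  induction n using Int.induction_on with
  | zero => exact ⟨1, 0, one_ne_zero, by simp⟩
  | succ k ih =>
    obtain ⟨a, b, ha, hab⟩ := ih
    refine ⟨q⁻¹ * a, b - q⁻¹ * a, mul_ne_zero (inv_ne_zero hq) ha, ?_⟩
    have h1 : ((k : ℤ) + 1) = 1 + (k : ℤ) := by ring
    rw [h1, zpow_add, zpow_one, AlgEquiv.mul_apply, hab, map_add, map_mul,
      hσ, hCs, hCs]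
    simp only [map_mul, map_sub, map_add, mul_sub, sub_mul, mul_one, map_one]
    ring
  | pred k ih =>
    obtain ⟨a, b, ha, hab⟩ := ih
    refine ⟨q * a, a + b, mul_ne_zero hq ha, ?_⟩
    have h1 : (-(k : ℤ) - 1) = -1 + -(k : ℤ) := by ring
    rw [h1, zpow_add, zpow_neg_one, AlgEquiv.mul_apply, hab, map_add, map_mul,
      hσinv, hCi, hCi]
    simp only [map_mul, map_add, map_one, mul_add, add_mul, mul_one]
    ring

lemma aux_hP (hq : q ≠ 0) (σ : RatFunc K ≃ₐ[K] RatFunc K)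
    (hσ : σ RatFunc.X = RatFunc.C q⁻¹ * (RatFunc.X - 1)) (n : ℤ) (b : ℕ) :
    ∃ P : Polynomial K, P.degree = b ∧
      algebraMap (Polynomial K) (RatFunc K) P
        = (σ ^ n) (∏ k ∈ Finset.range b, (σ ^ (-(k : ℤ))) RatFunc.X) := by
  induction b with
  | zero => exact ⟨1, Polynomial.degree_one, by simp⟩
  | succ b ih =>
    obtain ⟨P, hPdeg, hPval⟩ := ih
    obtain ⟨a', b', ha', hab'⟩ := aux_haff hq σ hσ (n + -(b : ℤ))
    refine ⟨P * (Polynomial.C a' * Polynomial.X + Polynomial.C b'), ?_, ?_⟩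
    · rw [Polynomial.degree_mul, hPdeg, Polynomial.degree_linear ha']
      exact_mod_cast rfl
    · rw [map_mul, hPval]
      rw [Finset.prod_range_succ, map_mul, ← AlgEquiv.mul_apply, ← zpow_add, hab']
      congr 1
      simp [map_add, map_mul, RatFunc.algebraMap_C, RatFunc.algebraMap_X]

lemma aux_hxz {U : Type} [Ring U] [Algebra K U] (j : RatFunc K →ₐ[K] U)
    (σ : RatFunc K ≃ₐ[K] RatFunc K) (x : Uˣ)
    (hcomm : ∀ r : RatFunc K, (x : U) * j r = j (σ r) * (x : U)) :
    ∀ (n : ℤ) (r : RatFunc K), ((x ^ n : Uˣ) : U) * j r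
      = j ((σ ^ n) r) * ((x ^ n : Uˣ) : U) := by
  have hx1 : ∀ r : RatFunc K, ((x⁻¹ : Uˣ) : U) * j r
      = j ((σ⁻¹ : RatFunc K ≃ₐ[K] RatFunc K) r) * ((x⁻¹ : Uˣ) : U) := by
    intro r
    have h := hcomm ((σ⁻¹ : RatFunc K ≃ₐ[K] RatFunc K) r)
    rw [show σ ((σ⁻¹ : RatFunc K ≃ₐ[K] RatFunc K) r) = r from σ.apply_symm_apply r] at h
    calc ((x⁻¹ : Uˣ) : U) * j r
        = ((x⁻¹ : Uˣ) : U) * (j r * (x : U) * ((x⁻¹ : Uˣ) : U)) := by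
          rw [mul_assoc (j r), Units.mul_inv, mul_one]
      _ = ((x⁻¹ : Uˣ) : U) * ((x : U) * j ((σ⁻¹ : RatFunc K ≃ₐ[K] RatFunc K) r)
            * ((x⁻¹ : Uˣ) : U)) := by rw [← h]
      _ = j ((σ⁻¹ : RatFunc K ≃ₐ[K] RatFunc K) r) * ((x⁻¹ : Uˣ) : U) := by
          rw [← mul_assoc, ← mul_assoc, Units.inv_mul, one_mul]
  intro n
  induction n using Int.induction_on with
  | zero => intro r; simp
  | succ k ih =>
    intro r
    have h1 : ((k : ℤ) + 1) = 1 + (k : ℤ) := by ring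
    rw [h1, zpow_add, zpow_one, Units.val_mul, mul_assoc, ih r, ← mul_assoc,
      hcomm, zpow_add σ, zpow_one, AlgEquiv.mul_apply, mul_assoc]
  | pred k ih =>
    intro r
    have h1 : (-(k : ℤ) - 1) = -1 + -(k : ℤ) := by ring
    rw [h1, zpow_add, zpow_neg_one, Units.val_mul, mul_assoc, ih r, ← mul_assoc,
      hx1, zpow_add σ, zpow_neg_one, AlgEquiv.mul_apply, mul_assoc]

end Aux
lemma aux_span (K : Type) [Field K] (q : K) (w : W0 K q) :
    w ∈ Submodule.span K (Set.range fun p : ℕ × ℕ =>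
      RingQuot.mkAlgHom K (W0Rel K q) (FreeAlgebra.ι K 1) ^ p.1 *
      RingQuot.mkAlgHom K (W0Rel K q) (FreeAlgebra.ι K 0) ^ p.2) := by
  set uu : W0 K q := RingQuot.mkAlgHom K (W0Rel K q) (FreeAlgebra.ι K 0) with huu
  set vv : W0 K q := RingQuot.mkAlgHom K (W0Rel K q) (FreeAlgebra.ι K 1) with hvv
  set M : ℕ × ℕ → W0 K q := fun p => vv ^ p.1 * uu ^ p.2 with hM
  set S : Submodule K (W0 K q) := Submodule.span K (Set.range M) with hS
  have hmem : ∀ a b : ℕ, vv ^ a * uu ^ b ∈ S :=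
    fun a b => Submodule.subset_span ⟨(a, b), rfl⟩
  have hrel : uu * vv = q • (vv * uu) + 1 := by
    have h := RingQuot.mkAlgHom_rel K (W0Rel.weyl (K := K) (q := q))
    simpa [map_mul, map_add, map_smul, map_one, huu, hvv] using h
  have hSu : ∀ w ∈ S, w * uu ∈ S := by
    intro w hw
    induction hw using Submodule.span_induction with
    | mem z hz =>
      obtain ⟨⟨a, b⟩, rfl⟩ := hz
      have : M (a, b) * uu = M (a, b + 1) := by
        simp only [hM, pow_succ, mul_assoc]
      rw [this]; exact hmem a (b + 1)
    | zero => rw [zero_mul]; exact S.zero_mem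
    | add y z _ _ hy hz => rw [add_mul]; exact S.add_mem hy hz
    | smul c y _ hy => rw [smul_mul_assoc]; exact S.smul_mem c hy
  have hKey : ∀ b a : ℕ, (vv ^ a * uu ^ b) * vv ∈ S := by
    intro b
    induction b with
    | zero => intro a; simpa [← pow_succ] using hmem (a + 1) 0
    | succ b ih =>
      intro a
      have h1 : (vv ^ a * uu ^ (b + 1)) * vv = (vv ^ a * uu ^ b) * (uu * vv) := by
        rw [pow_succ, ← mul_assoc, mul_assoc (vv ^ a * uu ^ b)]
      rw [h1, hrel, mul_add, mul_one, mul_smul_comm, ← mul_assoc]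
      exact S.add_mem (S.smul_mem q (hSu _ (ih a))) (hmem a b)
  have hSv : ∀ w ∈ S, w * vv ∈ S := by
    intro w hw
    induction hw using Submodule.span_induction with
    | mem z hz =>
      obtain ⟨⟨a, b⟩, rfl⟩ := hz
      exact hKey b a
    | zero => rw [zero_mul]; exact S.zero_mem
    | add y z _ _ hy hz => rw [add_mul]; exact S.add_mem hy hz
    | smul c y _ hy => rw [smul_mul_assoc]; exact S.smul_mem c hy
  have hmul : ∀ y : FreeAlgebra K (Fin 2), ∀ w ∈ S,
      w * RingQuot.mkAlgHom K (W0Rel K q) y ∈ S := by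
    intro y
    induction y using FreeAlgebra.induction with
    | grade0 r =>
      intro w hw
      rw [AlgHom.commutes, Algebra.algebraMap_eq_smul_one, mul_smul_comm, mul_one]
      exact S.smul_mem r hw
    | grade1 i =>
      intro w hw
      fin_cases i
      · exact hSu w hw
      · exact hSv w hw
    | mul y z hy hz =>
      intro w hw
      rw [map_mul, ← mul_assoc]
      exact hz _ (hy _ hw)
    | add y z hy hz =>
      intro w hw
      rw [map_add, mul_add]
      exact S.add_mem (hy _ hw) (hz _ hw)
  obtain ⟨y, rfl⟩ := RingQuot.mkAlgHom_surjective K (W0Rel K q) w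
  have h1 : (1 : W0 K q) ∈ S := by simpa using hmem 0 0
  simpa using hmul y 1 h1
/-- Let `U = K(h)[x^{±1}; σ]` be a skew Laurent polynomial ring over the rational
function field `K(h)`, where `σ(h) = q⁻¹(h-1)` (`q ≠ 0`): i.e. a `K`-algebra with an
embedding `j` of `K(h)`, an invertible `x` with `x·r = σ(r)·x`, in which the Laurent
monomials `j(r)·xⁿ` are independent. Then the `K`-algebra homomorphism
`β : W_q⁰ → U` with `β(u) = h·x⁻¹` and `β(v) = x` is injective. -/
theorem beta_injective (K : Type) [Field K] (q : K) (hq : q ≠ 0)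
    (U : Type) [Ring U] [Algebra K U]
    (j : RatFunc K →ₐ[K] U) (σ : RatFunc K ≃ₐ[K] RatFunc K)
    (hσ : σ RatFunc.X = RatFunc.C q⁻¹ * (RatFunc.X - 1))
    (x : Uˣ)
    (hcomm : ∀ r : RatFunc K, (x : U) * j r = j (σ r) * (x : U))
    (hindep : ∀ f : ℤ →₀ RatFunc K,
      (f.sum fun n r => j r * (((x ^ n : Uˣ)) : U)) = 0 → f = 0)
    (β : W0 K q →ₐ[K] U)
    (hu : β (RingQuot.mkAlgHom K (W0Rel K q) (FreeAlgebra.ι K 0)) =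
      j RatFunc.X * ((x⁻¹ : Uˣ) : U))
    (hv : β (RingQuot.mkAlgHom K (W0Rel K q) (FreeAlgebra.ι K 1)) = (x : U)) :
    Function.Injective β := by
  classical
  have hxz := aux_hxz j σ x hcomm
  set uu : W0 K q := RingQuot.mkAlgHom K (W0Rel K q) (FreeAlgebra.ι K 0) with huu
  set vv : W0 K q := RingQuot.mkAlgHom K (W0Rel K q) (FreeAlgebra.ι K 1) with hvv
  set M : ℕ × ℕ → W0 K q := fun p => vv ^ p.1 * uu ^ p.2 with hM
  set pol : ℕ → RatFunc K :=
    fun b => ∏ k ∈ Finset.range b, (σ ^ (-(k : ℤ))) RatFunc.X with hpol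
  have hpow : ∀ b : ℕ, (j RatFunc.X * ((x⁻¹ : Uˣ) : U)) ^ b
      = j (pol b) * ((x ^ (-(b : ℤ)) : Uˣ) : U) := by
    intro b
    induction b with
    | zero => simp [hpol]
    | succ b ih =>
      have hps : pol (b + 1) = pol b * (σ ^ (-(b : ℤ))) RatFunc.X := by
        simp only [hpol]
        exact Finset.prod_range_succ _ _
      have hxs : (x ^ (-(b : ℤ)) : Uˣ) * x⁻¹ = x ^ (-((b : ℕ) + 1 : ℕ) : ℤ) := by
        rw [← zpow_neg_one, ← zpow_add]
        congr 1
        push_cast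
        ring
      rw [pow_succ, ih, mul_assoc, ← mul_assoc ((x ^ (-(b : ℤ)) : Uˣ) : U),
        hxz (-(b : ℤ)) RatFunc.X, mul_assoc, ← Units.val_mul, hxs,
        ← mul_assoc, ← map_mul, ← hps]
  set c : ℕ × ℕ → RatFunc K := fun p => (σ ^ (p.1 : ℤ)) (pol p.2) with hc
  have hβM : ∀ p : ℕ × ℕ,
      β (M p) = j (c p) * ((x ^ ((p.1 : ℤ) - (p.2 : ℤ)) : Uˣ) : U) := by
    rintro ⟨a, b⟩
    have h1 : β (M (a, b)) = (x : U) ^ a * (j RatFunc.X * ((x⁻¹ : Uˣ) : U)) ^ b := by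
      simp only [hM, map_mul, map_pow, hu, hv]
    have h2 : ((x : U)) ^ a = ((x ^ (a : ℤ) : Uˣ) : U) := by
      rw [zpow_natCast, Units.val_pow_eq_pow_val]
    rw [h1, hpow b, h2, ← mul_assoc, hxz (a : ℤ) (pol b), mul_assoc,
      ← Units.val_mul, ← zpow_add, ← sub_eq_add_neg]
  -- linear independence of the images
  choose P hPdeg hPval using aux_hP hq σ hσ
  have hLIn : ∀ n : ℤ, LinearIndependent K (fun b : ℕ => (σ ^ (n + (b : ℤ))) (pol b)) := by
    intro n
    have h1 : LinearIndependent K (fun b : ℕ => P (n + (b : ℤ)) b) := by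
      apply linIndep_of_degree_eq
      intro b; exact hPdeg (n + (b : ℤ)) b
    have h2 := h1.map' (IsScalarTower.toAlgHom K (Polynomial K) (RatFunc K)).toLinearMap
      (LinearMap.ker_eq_bot.mpr (by
        intro a b hab
        exact RatFunc.algebraMap_injective K hab))
    convert h2 using 1
    funext b
    exact (hPval (n + (b : ℤ)) b).symm
    rfl
    rfl
  have hLI := Finsupp.linearIndependent_single
    (f := fun (n : ℤ) (b : ℕ) => (σ ^ (n + (b : ℤ))) (pol b)) hLIn
  have hLI2 : LinearIndependent K
      (fun p : ℕ × ℕ => Finsupp.single ((p.1 : ℤ) - (p.2 : ℤ)) (c p)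
        : ℕ × ℕ → (ℤ →₀ RatFunc K)) := by
    have hinj : Function.Injective
        (fun p : ℕ × ℕ => (⟨(p.1 : ℤ) - (p.2 : ℤ), p.2⟩ : Σ _ : ℤ, ℕ)) := by
      rintro ⟨a, b⟩ ⟨a', b'⟩ h
      simp only [Sigma.mk.inj_iff, heq_eq_eq] at h
      obtain ⟨h1, h2⟩ := h
      have : a = a' := by omega
      simp [this, h2]
    have h3 := hLI.comp _ hinj
    convert h3 using 1
    funext p
    have he : ((p.1 : ℤ) - (p.2 : ℤ)) + (p.2 : ℤ) = (p.1 : ℤ) := by omega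
    simp only [Function.comp_apply, he, hc]
  -- conclusion
  rw [injective_iff_map_eq_zero]
  intro w hw
  obtain ⟨l, hl⟩ := (Finsupp.mem_span_range_iff_exists_finsupp).mp (aux_span K q w)
  have hβw : (l.sum fun p a => a • (j (c p) * ((x ^ ((p.1 : ℤ) - (p.2 : ℤ)) : Uˣ) : U))) = 0 := by
    calc (l.sum fun p a => a • (j (c p) * ((x ^ ((p.1 : ℤ) - (p.2 : ℤ)) : Uˣ) : U)))
        = l.sum fun p a => a • β (M p) := by
          apply Finsupp.sum_congr
          intro p _
          rw [hβM p]
      _ = β (l.sum fun p a => a • M p) := by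
          rw [map_finsuppSum]
          apply Finsupp.sum_congr
          intro p _
          rw [map_smul]
      _ = 0 := by rw [hl, hw]
  set F : ℤ →₀ RatFunc K :=
    l.sum fun p a => Finsupp.single ((p.1 : ℤ) - (p.2 : ℤ)) (a • c p) with hF
  have hFsum : (F.sum fun n r => j r * ((x ^ n : Uˣ) : U)) = 0 := by
    rw [hF, Finsupp.sum_sum_index]
    · rw [← hβw]
      apply Finsupp.sum_congr
      intro p _
      rw [Finsupp.sum_single_index]
      · rw [map_smul, smul_mul_assoc]
      · rw [map_zero, zero_mul]
    · intro n; rw [map_zero, zero_mul]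
    · intro n r1 r2; rw [map_add, add_mul]
  have hF0 : F = 0 := hindep F hFsum
  have hl0 : l = 0 := by
    apply linearIndependent_iff.mp hLI2
    rw [Finsupp.linearCombination_apply]
    rw [← hF0, hF]
    apply Finsupp.sum_congr
    intro p _
    rw [Finsupp.smul_single]
  rw [← hl, hl0, Finsupp.sum_zero_index]
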